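/- Let X ∈ St(n,r) and V ∈ T_X St(n,r), and consider X⁺ = X + αV for α > 0. If W ∈ St(n,r) is any point, then ‖W − X⁺‖ ≥ dist of X⁺ to the Stiefel manifold, and in particular for the polar retraction R_X(αV) = (X+αV)(I_r + α²VᵀV)^{−1/2} one has ‖R_X(αV) − (X+αV)‖² = Σᵢ (√(1+α²σᵢ²) − 1)², where σᵢ are the singular values of V; consequently ‖R_X(αV) − (X+αV)‖ ≤ (α²/2)‖V‖². -/

import Mathlib

open Matrix

attribute [local instance] Matrix.frobeniusNormedAddCommGroup Matrix.frobeniusNormedSpace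

lemma normsq_eq_trace {m r : ℕ} (A : Matrix (Fin m) (Fin r) ℝ) :
    ‖A‖ ^ 2 = (Aᵀ * A).trace := by
  have h : ‖A‖ = (∑ i, ∑ j, ‖A i j‖ ^ (2 : ℝ)) ^ (1 / 2 : ℝ) := frobenius_norm_def A
  have hnn : (0:ℝ) ≤ ∑ i, ∑ j, ‖A i j‖ ^ (2 : ℝ) := by positivity
  have : ‖A‖ ^ 2 = ∑ i, ∑ j, ‖A i j‖ ^ (2 : ℝ) := by
    rw [h, ← Real.rpow_natCast _ 2, ← Real.rpow_mul hnn]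
    norm_num
  rw [this, Matrix.trace, Finset.sum_comm]
  simp [Matrix.diag, Matrix.mul_apply, Real.rpow_natCast, Real.norm_eq_abs, sq_abs,
    pow_two]

theorem stmt_12 (n r : ℕ) (X V : Matrix (Fin n) (Fin r) ℝ)
    (hX : Xᵀ * X = 1) (hV : Vᵀ * X + Xᵀ * V = 0)
    (α : ℝ) (hα : 0 < α)
    (σ : Fin r → ℝ) (hσ : ∀ i, 0 ≤ σ i)
    (Q : Matrix (Fin r) (Fin r) ℝ) (hQ : Qᵀ * Q = 1)
    (hdiag : Vᵀ * V = Q * Matrix.diagonal (fun i => σ i ^ 2) * Qᵀ)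
    (S : Matrix (Fin r) (Fin r) ℝ) (hS : S.PosDef)
    (hSsq : S * S = 1 + (α ^ 2) • (Vᵀ * V))
    (Xp R : Matrix (Fin n) (Fin r) ℝ)
    (hXp : Xp = X + α • V) (hR : R = Xp * S⁻¹) :
    (∀ W : Matrix (Fin n) (Fin r) ℝ, Wᵀ * W = 1 →
        ‖W - Xp‖ ≥ Metric.infDist Xp {Y : Matrix (Fin n) (Fin r) ℝ | Yᵀ * Y = 1}) ∧
    ‖R - Xp‖ ^ 2 = ∑ i : Fin r, (Real.sqrt (1 + α ^ 2 * σ i ^ 2) - 1) ^ 2 ∧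
    ‖R - Xp‖ ≤ (α ^ 2 / 2) * ‖V‖ ^ 2 := by
  -- basic facts
  have hQQ : Q * Qᵀ = 1 := mul_eq_one_comm.mp hQ
  have hSt : Sᵀ = S := by
    have := hS.isHermitian
    rwa [Matrix.IsHermitian, conjTranspose_eq_transpose_of_trivial] at this
  have hSdet : IsUnit S.det := isUnit_iff_ne_zero.mpr (ne_of_gt hS.det_pos)
  have hSinv : S⁻¹ * S = 1 := Matrix.nonsing_inv_mul S hSdet
  have hSinv' : S * S⁻¹ = 1 := Matrix.mul_nonsing_inv S hSdet
  -- the explicit square root of S² as Q D Qᵀ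
  set D : Matrix (Fin r) (Fin r) ℝ :=
    Matrix.diagonal (fun i => Real.sqrt (1 + α ^ 2 * σ i ^ 2)) with hD
  have hDsq : D * D = Matrix.diagonal (fun i => 1 + α ^ 2 * σ i ^ 2) := by
    have hfun : (fun i => Real.sqrt (1 + α ^ 2 * σ i ^ 2) * Real.sqrt (1 + α ^ 2 * σ i ^ 2))
        = fun i => 1 + α ^ 2 * σ i ^ 2 :=
      funext fun i => Real.mul_self_sqrt (by positivity)
    rw [hD, Matrix.diagonal_mul_diagonal, hfun]
  have hQDQps : (Q * D * Qᵀ).PosSemidef := by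
    have hDps : D.PosSemidef := Matrix.posSemidef_diagonal_iff.mpr
      (fun i => Real.sqrt_nonneg _)
    have := hDps.mul_mul_conjTranspose_same Q
    rwa [conjTranspose_eq_transpose_of_trivial] at this
  have hsq : (Q * D * Qᵀ) ^ 2 = S ^ 2 := by
    have h1 : (Q * D * Qᵀ) ^ 2 = Q * (D * D) * Qᵀ := by
      rw [pow_two]
      calc Q * D * Qᵀ * (Q * D * Qᵀ) = Q * D * (Qᵀ * Q) * D * Qᵀ := by
            noncomm_ring
        _ = Q * (D * D) * Qᵀ := by rw [hQ]; noncomm_ring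
    rw [h1, hDsq, pow_two S, hSsq, hdiag]
    have : Matrix.diagonal (fun i => 1 + α ^ 2 * σ i ^ 2)
        = 1 + α ^ 2 • Matrix.diagonal (fun i => σ i ^ 2) := by
      rw [← Matrix.diagonal_one, ← Matrix.diagonal_smul, ← Matrix.diagonal_add]
      congr 1
    rw [this, Matrix.mul_add, Matrix.add_mul, Matrix.mul_one, hQQ,
      Matrix.mul_smul, Matrix.smul_mul]
  have hSform : S = Q * D * Qᵀ := by
    open scoped MatrixOrder in
    exact (CFC.sq_eq_sq_iff S (Q * D * Qᵀ) hS.posSemidef.nonneg hQDQps.nonneg).mp hsq.symm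
  -- Xpᵀ Xp = S²
  have hXpXp : Xpᵀ * Xp = S * S := by
    rw [hXp, hSsq, Matrix.transpose_add, Matrix.transpose_smul]
    rw [Matrix.add_mul, Matrix.mul_add, Matrix.mul_add, Matrix.smul_mul,
      Matrix.mul_smul, Matrix.mul_smul, hX]
    have h0 : α • (Xᵀ * V) + α • (Vᵀ * X) = 0 := by
      rw [← smul_add, add_comm, hV, smul_zero]
    have h2 : α • (α • Vᵀ * V) = α ^ 2 • (Vᵀ * V) := by
      rw [Matrix.smul_mul, smul_smul, ← pow_two]
    calc 1 + α • (Xᵀ * V) + (α • (Vᵀ * X) + α • (α • Vᵀ * V))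
        = 1 + (α • (Xᵀ * V) + α • (Vᵀ * X)) + α • (α • Vᵀ * V) := by abel
      _ = 1 + α ^ 2 • (Vᵀ * V) := by rw [h0, add_zero, h2]
  -- (R - Xp)ᵀ (R - Xp) = (S-1)ᵀ (S-1)
  have hRXp : R - Xp = Xp * (S⁻¹ - 1) := by
    rw [hR, Matrix.mul_sub, Matrix.mul_one]
  have hSinvT : (S⁻¹)ᵀ = S⁻¹ := by rw [Matrix.transpose_nonsing_inv, hSt]
  have key : (R - Xp)ᵀ * (R - Xp) = (S - 1)ᵀ * (S - 1) := by
    rw [hRXp, Matrix.transpose_mul]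
    have e0 : (S⁻¹ - 1)ᵀ = S⁻¹ - 1 := by
      rw [Matrix.transpose_sub, hSinvT, Matrix.transpose_one]
    rw [e0, Matrix.mul_assoc, ← Matrix.mul_assoc Xpᵀ, hXpXp]
    have e1 : (S⁻¹ - 1) * (S * S * (S⁻¹ - 1)) = (S - S * S) * (S⁻¹ - 1) := by
      rw [← Matrix.mul_assoc, Matrix.sub_mul, Matrix.one_mul, ← Matrix.mul_assoc,
        hSinv, Matrix.one_mul]
    have e2 : (S - S * S) * (S⁻¹ - 1) = 1 - S - (S - S * S) := by
      rw [Matrix.sub_mul, Matrix.mul_sub, Matrix.mul_sub, hSinv',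
        Matrix.mul_assoc, hSinv', Matrix.mul_one, Matrix.mul_one]
    have e3 : (S - 1)ᵀ * (S - 1) = 1 - S - (S - S * S) := by
      rw [Matrix.transpose_sub, hSt, Matrix.transpose_one, Matrix.sub_mul,
        Matrix.mul_sub, Matrix.one_mul, Matrix.mul_one]
      abel
    rw [e1, e2, e3]
  -- exact value of the squared error
  have hval : ‖R - Xp‖ ^ 2 = ∑ i : Fin r, (Real.sqrt (1 + α ^ 2 * σ i ^ 2) - 1) ^ 2 := by
    rw [normsq_eq_trace, key]
    have hS1 : S - 1 = Q * (D - 1) * Qᵀ := by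
      rw [hSform, Matrix.mul_sub, Matrix.sub_mul, Matrix.mul_one, hQQ]
    have hD1t : (D - 1)ᵀ = D - 1 := by
      rw [Matrix.transpose_sub, hD, Matrix.diagonal_transpose, Matrix.transpose_one]
    have hD1 : D - 1 = Matrix.diagonal (fun i => Real.sqrt (1 + α ^ 2 * σ i ^ 2) - 1) := by
      rw [hD, ← Matrix.diagonal_one, ← Matrix.diagonal_sub]
    have hS1t : (S - 1)ᵀ = S - 1 := by
      rw [Matrix.transpose_sub, hSt, Matrix.transpose_one]
    have this2 : Q * (D - 1) * Qᵀ * (Q * (D - 1) * Qᵀ) = Q * ((D - 1) * (D - 1)) * Qᵀ := by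
      calc Q * (D - 1) * Qᵀ * (Q * (D - 1) * Qᵀ)
          = Q * (D - 1) * (Qᵀ * Q) * (D - 1) * Qᵀ := by noncomm_ring
        _ = Q * ((D - 1) * (D - 1)) * Qᵀ := by rw [hQ]; noncomm_ring
    rw [hS1t, hS1, this2]
    rw [Matrix.trace_mul_comm, ← Matrix.mul_assoc, hQ, Matrix.one_mul]
    rw [hD1, Matrix.diagonal_mul_diagonal, Matrix.trace_diagonal]
    exact Finset.sum_congr rfl fun i _ => (pow_two _).symm
  refine ⟨?_, hval, ?_⟩
  · intro W hW
    have hWmem : W ∈ {Y : Matrix (Fin n) (Fin r) ℝ | Yᵀ * Y = 1} := hW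
    calc Metric.infDist Xp {Y : Matrix (Fin n) (Fin r) ℝ | Yᵀ * Y = 1}
        ≤ dist Xp W := Metric.infDist_le_dist_of_mem hWmem
      _ = ‖W - Xp‖ := by rw [dist_eq_norm, norm_sub_rev]
  · -- the bound
    have hVn : ‖V‖ ^ 2 = ∑ i : Fin r, σ i ^ 2 := by
      rw [normsq_eq_trace, hdiag, Matrix.trace_mul_comm, ← Matrix.mul_assoc, hQ,
        Matrix.one_mul, Matrix.trace_diagonal]
    have hbd : ‖R - Xp‖ ^ 2 ≤ ((α ^ 2 / 2) * ‖V‖ ^ 2) ^ 2 := by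
      rw [hval, hVn]
      calc ∑ i : Fin r, (Real.sqrt (1 + α ^ 2 * σ i ^ 2) - 1) ^ 2
          ≤ ∑ i : Fin r, (α ^ 2 * σ i ^ 2 / 2) ^ 2 := by
            refine Finset.sum_le_sum fun i _ => ?_
            have hs : (0:ℝ) ≤ α ^ 2 * σ i ^ 2 := by positivity
            have h1 : (1:ℝ) ≤ Real.sqrt (1 + α ^ 2 * σ i ^ 2) :=
              Real.one_le_sqrt.mpr (by linarith)
            have h2 : Real.sqrt (1 + α ^ 2 * σ i ^ 2) ≤ 1 + α ^ 2 * σ i ^ 2 / 2 := by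
              have := Real.sqrt_le_sqrt (show (1:ℝ) + α ^ 2 * σ i ^ 2
                  ≤ (1 + α ^ 2 * σ i ^ 2 / 2) ^ 2 by nlinarith)
              rwa [Real.sqrt_sq (by positivity)] at this
            have := pow_le_pow_left₀ (by linarith : (0:ℝ) ≤ Real.sqrt (1 + α ^ 2 * σ i ^ 2) - 1)
              (by linarith : Real.sqrt (1 + α ^ 2 * σ i ^ 2) - 1 ≤ α ^ 2 * σ i ^ 2 / 2) 2
            exact this
        _ ≤ (∑ i : Fin r, α ^ 2 * σ i ^ 2 / 2) ^ 2 :=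
            Finset.sum_sq_le_sq_sum_of_nonneg fun i _ => by positivity
        _ = ((α ^ 2 / 2) * ∑ i : Fin r, σ i ^ 2) ^ 2 := by
            rw [Finset.mul_sum]
            congr 1
            exact Finset.sum_congr rfl fun i _ => by ring
    exact le_of_pow_le_pow_left₀ two_ne_zero (by positivity) hbd
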